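/- A finite lattice is distributive if and only if it is both upper locally distributive and lower locally distributive. -/

import Mathlib

/-- Meet-irreducible element of a finite bounded lattice: exactly one upper
cover, or the top element. -/
def MeetIrredL {P : Type*} [Lattice P] [OrderTop P] (m : P) : Prop :=
  (∃! u : P, m ⋖ u) ∨ m = ⊤

/-- Join-irreducible element: exactly one lower cover, or the bottom element. -/
def JoinIrredL {P : Type*} [Lattice P] [OrderBot P] (m : P) : Prop :=
  (∃! u : P, u ⋖ m) ∨ m = ⊥

section Aux

open Finset

set_option linter.unusedSectionVars false

variable {P : Type} [Lattice P] [Fintype P] [BoundedOrder P]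

lemma finsetExistsMinimalOld {α : Type*} [Preorder α] (s : Finset α) (h : s.Nonempty) :
    ∃ m ∈ s, ∀ x ∈ s, ¬x < m := by
  obtain ⟨m, hm⟩ := s.exists_minimal h
  exact ⟨m, hm.prop, fun x hx hlt => hm.not_lt hx hlt⟩

lemma finsetExistsMaximalOld {α : Type*} [Preorder α] (s : Finset α) (h : s.Nonempty) :
    ∃ m ∈ s, ∀ x ∈ s, ¬m < x := by
  obtain ⟨m, hm⟩ := s.exists_maximal h
  exact ⟨m, hm.prop, fun x hx hlt => hm.not_gt hx hlt⟩

/-- between a strict inequality there is a cover of the bottom end -/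
lemma auxCovUp {x y : P} (h : x < y) : ∃ u, x ⋖ u ∧ u ≤ y := by
  classical
  have hne : (univ.filter fun z : P => x < z ∧ z ≤ y).Nonempty :=
    ⟨y, by simp [h]⟩
  obtain ⟨u, hu, hmin⟩ := finsetExistsMinimalOld _ hne
  simp only [mem_filter, mem_univ, true_and] at hu hmin
  refine ⟨u, ⟨hu.1, fun c hc1 hc2 => ?_⟩, hu.2⟩
  exact hmin c ⟨hc1, hc2.le.trans hu.2⟩ hc2

lemma auxCovDown {x y : P} (h : x < y) : ∃ u, x ≤ u ∧ u ⋖ y := by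
  classical
  have hne : (univ.filter fun z : P => x ≤ z ∧ z < y).Nonempty :=
    ⟨x, by simp [h]⟩
  obtain ⟨u, hu, hmax⟩ := finsetExistsMaximalOld _ hne
  simp only [mem_filter, mem_univ, true_and] at hu hmax
  refine ⟨u, hu.1, hu.2, fun c hc1 hc2 => ?_⟩
  exact hmax c ⟨hu.1.trans hc1.le, hc2⟩ hc1

/-- two distinct upper covers meet in the element -/
lemma covMeet {a w₁ w₂ : P} (h1 : a ⋖ w₁) (h2 : a ⋖ w₂) (hne : w₁ ≠ w₂) :
    w₁ ⊓ w₂ = a := by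
  have hle : a ≤ w₁ ⊓ w₂ := le_inf h1.lt.le h2.lt.le
  rcases eq_or_lt_of_le hle with h | h
  · exact h.symm
  · exfalso
    have e1 : w₁ ⊓ w₂ = w₁ := by
      rcases eq_or_lt_of_le (inf_le_left : w₁ ⊓ w₂ ≤ w₁) with h' | h'
      · exact h'
      · exact absurd h' (h1.2 h)
    have e2 : w₁ ⊓ w₂ = w₂ := by
      rcases eq_or_lt_of_le (inf_le_right : w₁ ⊓ w₂ ≤ w₂) with h' | h'
      · exact h'
      · exact absurd h' (h2.2 h)
    exact hne (e1.symm.trans e2)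

/-- two distinct lower covers join to the element -/
lemma covJoin {a w₁ w₂ : P} (h1 : w₁ ⋖ a) (h2 : w₂ ⋖ a) (hne : w₁ ≠ w₂) :
    w₁ ⊔ w₂ = a := by
  have hle : w₁ ⊔ w₂ ≤ a := sup_le h1.lt.le h2.lt.le
  rcases eq_or_lt_of_le hle with h | h
  · exact h
  · exfalso
    have e1 : w₁ ⊔ w₂ = w₁ := by
      rcases eq_or_lt_of_le (le_sup_left : w₁ ≤ w₁ ⊔ w₂) with h' | h'
      · exact h'.symm
      · exact absurd h (h1.2 h')
    have e2 : w₁ ⊔ w₂ = w₂ := by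
      rcases eq_or_lt_of_le (le_sup_right : w₂ ≤ w₁ ⊔ w₂) with h' | h'
      · exact h'.symm
      · exact absurd h (h2.2 h')
    exact hne (e1.symm.trans e2)

open Classical in
/-- the set of meet-irreducibles above `x` -/
noncomputable def Ust (x : P) : Finset P :=
  Finset.univ.filter fun m => MeetIrredL m ∧ x ≤ m

open Classical in
/-- the set of join-irreducibles below `x` -/
noncomputable def Dst (x : P) : Finset P :=
  Finset.univ.filter fun j => JoinIrredL j ∧ j ≤ x

lemma mem_Ust {m x : P} : m ∈ Ust x ↔ MeetIrredL m ∧ x ≤ m := by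
  classical simp [Ust]

lemma mem_Dst {j x : P} : j ∈ Dst x ↔ JoinIrredL j ∧ j ≤ x := by
  classical simp [Dst]

/-- every element is the meet of the meet-irreducibles above it -/
lemma inf_Ust (x : P) : (Ust x).inf id = x := by
  induction x using IsWellFounded.induction (fun a b : P => a > b) with
  | _ a ih =>
    by_cases hirr : MeetIrredL a
    · refine le_antisymm (Finset.inf_le (mem_Ust.2 ⟨hirr, le_rfl⟩)) ?_
      exact Finset.le_inf fun m hm => (mem_Ust.1 hm).2
    · have hat : a ≠ ⊤ := fun h => hirr (Or.inr h)
      obtain ⟨u, hu, -⟩ := auxCovUp (lt_top_iff_ne_top.2 hat)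
      have hnu : ¬∃! z, a ⋖ z := fun h => hirr (Or.inl h)
      have hv : ∃ v, a ⋖ v ∧ v ≠ u := by
        by_contra hc
        push_neg at hc
        exact hnu ⟨u, hu, fun z hz => hc z hz⟩
      obtain ⟨v, hv, hvu⟩ := hv
      have hSu : Ust u ⊆ Ust a := fun m hm =>
        mem_Ust.2 ⟨(mem_Ust.1 hm).1, hu.lt.le.trans (mem_Ust.1 hm).2⟩
      have hSv : Ust v ⊆ Ust a := fun m hm =>
        mem_Ust.2 ⟨(mem_Ust.1 hm).1, hv.lt.le.trans (mem_Ust.1 hm).2⟩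
      refine le_antisymm ?_ (Finset.le_inf fun m hm => (mem_Ust.1 hm).2)
      calc (Ust a).inf id ≤ (Ust u).inf id ⊓ (Ust v).inf id :=
            le_inf (Finset.inf_mono hSu) (Finset.inf_mono hSv)
        _ = a := by rw [ih u hu.lt, ih v hv.lt, covMeet hu hv (Ne.symm hvu)]

/-- every element is the join of the join-irreducibles below it -/
lemma sup_Dst (x : P) : (Dst x).sup id = x := by
  induction x using IsWellFounded.induction (fun a b : P => a < b) with
  | _ a ih =>
    by_cases hirr : JoinIrredL a
    · refine le_antisymm (Finset.sup_le fun m hm => (mem_Dst.1 hm).2) ?_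
      exact Finset.le_sup (f := id) ((mem_Dst (j := a) (x := a)).2 ⟨hirr, le_rfl⟩)
    · have hat : a ≠ ⊥ := fun h => hirr (Or.inr h)
      obtain ⟨u, -, hu⟩ := auxCovDown (bot_lt_iff_ne_bot.2 hat)
      have hnu : ¬∃! z, z ⋖ a := fun h => hirr (Or.inl h)
      have hv : ∃ v, v ⋖ a ∧ v ≠ u := by
        by_contra hc
        push_neg at hc
        exact hnu ⟨u, hu, fun z hz => hc z hz⟩
      obtain ⟨v, hv, hvu⟩ := hv
      have hSu : Dst u ⊆ Dst a := fun m hm =>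
        mem_Dst.2 ⟨(mem_Dst.1 hm).1, (mem_Dst.1 hm).2.trans hu.lt.le⟩
      have hSv : Dst v ⊆ Dst a := fun m hm =>
        mem_Dst.2 ⟨(mem_Dst.1 hm).1, (mem_Dst.1 hm).2.trans hv.lt.le⟩
      refine le_antisymm (Finset.sup_le fun m hm => (mem_Dst.1 hm).2) ?_
      calc a = (Dst u).sup id ⊔ (Dst v).sup id := by
            rw [ih u hu.lt, ih v hv.lt, covJoin hu hv (Ne.symm hvu)]
        _ ≤ (Dst a).sup id := sup_le (Finset.sup_mono hSu) (Finset.sup_mono hSv)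

end Aux

section Forward

open Finset

variable {P : Type} [Lattice P] [Fintype P] [BoundedOrder P]

lemma meetPrime (hdual : ∀ x y z : P, x ⊔ y ⊓ z = (x ⊔ y) ⊓ (x ⊔ z))
    {m : P} (hm : MeetIrredL m) (hmt : m ≠ ⊤) {a b : P} (hab : a ⊓ b ≤ m) :
    a ≤ m ∨ b ≤ m := by
  by_contra hc
  push_neg at hc
  obtain ⟨ha, hb⟩ := hc
  obtain ⟨u, hu, huniq⟩ := hm.resolve_right hmt
  have hma : m < m ⊔ a := left_lt_sup.2 ha
  have hmb : m < m ⊔ b := left_lt_sup.2 hb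
  obtain ⟨w1, hw1, hw1le⟩ := auxCovUp hma
  obtain ⟨w2, hw2, hw2le⟩ := auxCovUp hmb
  have h1 : u ≤ m ⊔ a := (huniq w1 hw1) ▸ hw1le
  have h2 : u ≤ m ⊔ b := (huniq w2 hw2) ▸ hw2le
  have h3 : (m ⊔ a) ⊓ (m ⊔ b) = m := by
    rw [← hdual]; exact sup_eq_left.2 hab
  exact (not_le_of_gt hu.lt) (h3 ▸ le_inf h1 h2)

lemma joinPrime (hd : ∀ x y z : P, x ⊓ (y ⊔ z) = x ⊓ y ⊔ x ⊓ z)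
    {m : P} (hm : JoinIrredL m) (hmt : m ≠ ⊥) {a b : P} (hab : m ≤ a ⊔ b) :
    m ≤ a ∨ m ≤ b := by
  by_contra hc
  push_neg at hc
  obtain ⟨ha, hb⟩ := hc
  obtain ⟨u, hu, huniq⟩ := hm.resolve_right hmt
  have hma : m ⊓ a < m := inf_lt_left.2 ha
  have hmb : m ⊓ b < m := inf_lt_left.2 hb
  obtain ⟨w1, hw1le, hw1⟩ := auxCovDown hma
  obtain ⟨w2, hw2le, hw2⟩ := auxCovDown hmb
  have h1 : m ⊓ a ≤ u := (huniq w1 hw1) ▸ hw1le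
  have h2 : m ⊓ b ≤ u := (huniq w2 hw2) ▸ hw2le
  have h3 : m ⊓ a ⊔ m ⊓ b = m := by
    rw [← hd]; exact inf_eq_left.2 hab
  exact (not_le_of_gt hu.lt) (h3 ▸ sup_le h1 h2)

lemma meetPrimeFinset (hdual : ∀ x y z : P, x ⊔ y ⊓ z = (x ⊔ y) ⊓ (x ⊔ z))
    {m : P} (hm : MeetIrredL m) (hmt : m ≠ ⊤) (A : Finset P) (hA : A.inf id ≤ m) :
    ∃ a ∈ A, a ≤ m := by
  classical
  induction A using Finset.induction_on with
  | empty => simp only [Finset.inf_empty, top_le_iff] at hA; exact absurd hA hmt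
  | @insert a s ha ih =>
    rw [Finset.inf_insert] at hA
    rcases meetPrime hdual hm hmt hA with h | h
    · exact ⟨a, Finset.mem_insert_self a s, h⟩
    · obtain ⟨x, hx, hxm⟩ := ih h
      exact ⟨x, Finset.mem_insert_of_mem hx, hxm⟩

lemma joinPrimeFinset (hd : ∀ x y z : P, x ⊓ (y ⊔ z) = x ⊓ y ⊔ x ⊓ z)
    {m : P} (hm : JoinIrredL m) (hmt : m ≠ ⊥) (A : Finset P) (hA : m ≤ A.sup id) :
    ∃ a ∈ A, m ≤ a := by
  classical
  induction A using Finset.induction_on with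
  | empty => simp only [Finset.sup_empty, le_bot_iff] at hA; exact absurd hA hmt
  | @insert a s ha ih =>
    rw [Finset.sup_insert] at hA
    rcases joinPrime hd hm hmt hA with h | h
    · exact ⟨a, Finset.mem_insert_self a s, h⟩
    · obtain ⟨x, hx, hxm⟩ := ih h
      exact ⟨x, Finset.mem_insert_of_mem hx, hxm⟩

lemma fwdMeet (hdual : ∀ x y z : P, x ⊔ y ⊓ z = (x ⊔ y) ⊓ (x ⊔ z)) (x : P) :
    ∃ M : Finset P, (∀ m ∈ M, MeetIrredL m) ∧ x = M.inf id ∧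
      (∀ A : Finset P, (∀ m ∈ A, MeetIrredL m) → x = A.inf id → M ⊆ A) := by
  classical
  by_cases hx : x = ⊤
  · exact ⟨∅, by simp, by simp [hx], fun A _ _ => Finset.empty_subset A⟩
  · set Mn := (Ust x).filter (fun m => ∀ m' ∈ Ust x, m' ≤ m → m' = m) with hMn
    have hMS : Mn ⊆ Ust x := Finset.filter_subset _ _
    have hmin : ∀ m ∈ Mn, ∀ m' ∈ Ust x, m' ≤ m → m' = m := fun m hm => (Finset.mem_filter.1 hm).2
    have hinfle : ∀ m ∈ Ust x, Mn.inf id ≤ m := by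
      intro m hm
      have hne : ((Ust x).filter (fun m' => m' ≤ m)).Nonempty :=
        ⟨m, Finset.mem_filter.2 ⟨hm, le_rfl⟩⟩
      obtain ⟨m0, hm0, hmin0⟩ := finsetExistsMinimalOld _ hne
      rw [Finset.mem_filter] at hm0
      have hm0M : m0 ∈ Mn := by
        rw [hMn, Finset.mem_filter]
        refine ⟨hm0.1, fun m' hm' hle => ?_⟩
        by_contra hne'
        exact hmin0 m' (Finset.mem_filter.2 ⟨hm', hle.trans hm0.2⟩) (lt_of_le_of_ne hle hne')
      exact (Finset.inf_le hm0M).trans hm0.2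
    have hnotop : ∀ m ∈ Mn, m ≠ ⊤ := by
      intro m hm hmt
      subst hmt
      have htop : (Ust x).inf id = ⊤ := by
        refine le_antisymm le_top (Finset.le_inf fun m' hm' => ?_)
        have he := hmin _ hm m' hm' le_top
        simp [he]
      exact hx ((inf_Ust x).symm.trans htop)
    refine ⟨Mn, fun m hm => (mem_Ust.1 (hMS hm)).1, ?_, ?_⟩
    · refine le_antisymm (Finset.le_inf (f := id) fun m hm => (mem_Ust.1 (hMS hm)).2) ?_
      calc Mn.inf id ≤ (Ust x).inf id := Finset.le_inf hinfle
        _ = x := inf_Ust x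
    · intro A hAirr hAinf m hmM
      have hmt := hnotop m hmM
      have hmirr := (mem_Ust.1 (hMS hmM)).1
      have hAm : A.inf id ≤ m := by rw [← hAinf]; exact (mem_Ust.1 (hMS hmM)).2
      obtain ⟨a, haA, ham⟩ := meetPrimeFinset hdual hmirr hmt A hAm
      have haS : a ∈ Ust x := mem_Ust.2 ⟨hAirr a haA, by rw [hAinf]; exact Finset.inf_le haA⟩
      have hae : a = m := hmin m hmM a haS ham
      exact hae ▸ haA

lemma fwdJoin (hd : ∀ x y z : P, x ⊓ (y ⊔ z) = x ⊓ y ⊔ x ⊓ z) (x : P) :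
    ∃ J : Finset P, (∀ m ∈ J, JoinIrredL m) ∧ x = J.sup id ∧
      (∀ A : Finset P, (∀ m ∈ A, JoinIrredL m) → x = A.sup id → J ⊆ A) := by
  classical
  by_cases hx : x = ⊥
  · exact ⟨∅, by simp, by simp [hx], fun A _ _ => Finset.empty_subset A⟩
  · set Mn := (Dst x).filter (fun m => ∀ m' ∈ Dst x, m ≤ m' → m' = m) with hMn
    have hMS : Mn ⊆ Dst x := Finset.filter_subset _ _
    have hmax : ∀ m ∈ Mn, ∀ m' ∈ Dst x, m ≤ m' → m' = m := fun m hm => (Finset.mem_filter.1 hm).2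
    have hsuple : ∀ m ∈ Dst x, m ≤ Mn.sup id := by
      intro m hm
      have hne : ((Dst x).filter (fun m' => m ≤ m')).Nonempty :=
        ⟨m, Finset.mem_filter.2 ⟨hm, le_rfl⟩⟩
      obtain ⟨m0, hm0, hmax0⟩ := finsetExistsMaximalOld _ hne
      rw [Finset.mem_filter] at hm0
      have hm0M : m0 ∈ Mn := by
        rw [hMn, Finset.mem_filter]
        refine ⟨hm0.1, fun m' hm' hle => ?_⟩
        by_contra hne'
        exact hmax0 m' (Finset.mem_filter.2 ⟨hm', hm0.2.trans hle⟩) (lt_of_le_of_ne hle (Ne.symm hne'))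
      exact hm0.2.trans (Finset.le_sup (f := id) hm0M)
    have hnotbot : ∀ m ∈ Mn, m ≠ ⊥ := by
      intro m hm hmt
      subst hmt
      have hbot : (Dst x).sup id = ⊥ := by
        refine le_antisymm (Finset.sup_le fun m' hm' => ?_) bot_le
        have he := hmax _ hm m' hm' bot_le
        simp [he]
      exact hx ((sup_Dst x).symm.trans hbot)
    refine ⟨Mn, fun m hm => (mem_Dst.1 (hMS hm)).1, ?_, ?_⟩
    · refine le_antisymm ?_ (Finset.sup_le (f := id) fun m hm => (mem_Dst.1 (hMS hm)).2)
      calc x = (Dst x).sup id := (sup_Dst x).symm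
        _ ≤ Mn.sup id := Finset.sup_le hsuple
    · intro A hAirr hAsup m hmM
      have hmt := hnotbot m hmM
      have hmirr := (mem_Dst.1 (hMS hmM)).1
      have hAm : m ≤ A.sup id := by rw [← hAsup]; exact (mem_Dst.1 (hMS hmM)).2
      obtain ⟨a, haA, ham⟩ := joinPrimeFinset hd hmirr hmt A hAm
      have haS : a ∈ Dst x := mem_Dst.2 ⟨hAirr a haA, by rw [hAsup]; exact Finset.le_sup (f := id) haA⟩
      have hae : a = m := hmax m hmM a haS ham
      exact hae ▸ haA

end Forward

section Backward

open Finset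

variable {P : Type} [Lattice P] [Fintype P] [BoundedOrder P]

lemma bwdCovD
    (hJ : ∀ x : P, ∃ J : Finset P, (∀ m ∈ J, JoinIrredL m) ∧ x = J.sup id ∧
        (∀ A : Finset P, (∀ m ∈ A, JoinIrredL m) → x = A.sup id → J ⊆ A))
    {x y : P} (h : x ⋖ y) : (Dst y).card = (Dst x).card + 1 := by
  classical
  obtain ⟨Jy, hJyi, hJys, hJym⟩ := hJ y
  obtain ⟨Jx, hJxi, hJxs, hJxm⟩ := hJ x
  have hjex : ∃ j ∈ Jy, ¬j ≤ x := by
    by_contra hc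
    push_neg at hc
    exact (not_le_of_gt h.lt) (by rw [hJys]; exact Finset.sup_le (f := id) hc)
  obtain ⟨j, hjJ, hjx⟩ := hjex
  have hjy : j ≤ y := by rw [hJys]; exact Finset.le_sup (f := id) hjJ
  have huniq : ∀ j', JoinIrredL j' → j' ≤ y → ¬j' ≤ x → j' = j := by
    intro j' hi' hy' hx'
    have hxy : x ⊔ j' = y := by
      have hlt : x < x ⊔ j' := left_lt_sup.2 hx'
      have hle : x ⊔ j' ≤ y := sup_le h.lt.le hy'
      rcases eq_or_lt_of_le hle with he | he
      · exact he
      · exact absurd he (h.2 hlt)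
    have hsup : y = (insert j' Jx).sup id := by
      rw [Finset.sup_insert, ← hJxs, id_eq, sup_comm j' x, hxy]
    have hsubset := hJym (insert j' Jx)
      (fun m hm => by
        rcases Finset.mem_insert.1 hm with rfl | hm'
        · exact hi'
        · exact hJxi m hm') hsup
    rcases Finset.mem_insert.1 (hsubset hjJ) with he | he
    · exact he.symm
    · exact absurd (show j ≤ x by rw [hJxs]; exact Finset.le_sup (f := id) he) hjx
  have hDxy : Dst y = insert j (Dst x) := by
    ext k
    simp only [Finset.mem_insert, mem_Dst]
    constructor
    · rintro ⟨hk1, hk2⟩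
      by_cases hkx : k ≤ x
      · exact Or.inr ⟨hk1, hkx⟩
      · exact Or.inl (huniq k hk1 hk2 hkx)
    · rintro (rfl | ⟨hk1, hk2⟩)
      · exact ⟨hJyi _ hjJ, hjy⟩
      · exact ⟨hk1, hk2.trans h.lt.le⟩
  rw [hDxy, Finset.card_insert_of_notMem fun hc => hjx (mem_Dst.1 hc).2]

lemma bwdCovU
    (hU : ∀ x : P, ∃ M : Finset P, (∀ m ∈ M, MeetIrredL m) ∧ x = M.inf id ∧
        (∀ A : Finset P, (∀ m ∈ A, MeetIrredL m) → x = A.inf id → M ⊆ A))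
    {x y : P} (h : x ⋖ y) : (Ust x).card = (Ust y).card + 1 := by
  classical
  obtain ⟨Mx, hMxi, hMxs, hMxm⟩ := hU x
  obtain ⟨My, hMyi, hMys, hMym⟩ := hU y
  have hmex : ∃ m ∈ Mx, ¬y ≤ m := by
    by_contra hc
    push_neg at hc
    exact (not_le_of_gt h.lt) (by rw [hMxs]; exact Finset.le_inf (f := id) hc)
  obtain ⟨m, hmM, hmy⟩ := hmex
  have hmx : x ≤ m := by rw [hMxs]; exact Finset.inf_le (f := id) hmM
  have huniq : ∀ m', MeetIrredL m' → x ≤ m' → ¬y ≤ m' → m' = m := by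
    intro m' hi' hx' hy'
    have hxy : m' ⊓ y = x := by
      have hlt : m' ⊓ y < y := inf_lt_right.2 hy'
      have hle : x ≤ m' ⊓ y := le_inf hx' h.lt.le
      rcases eq_or_lt_of_le hle with he | he
      · exact he.symm
      · exact absurd hlt (h.2 he)
    have hinf : x = (insert m' My).inf id := by
      rw [Finset.inf_insert, ← hMys, id_eq, hxy]
    have hsubset := hMxm (insert m' My)
      (fun k hk => by
        rcases Finset.mem_insert.1 hk with rfl | hk'
        · exact hi'
        · exact hMyi k hk') hinf
    rcases Finset.mem_insert.1 (hsubset hmM) with he | he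
    · exact he.symm
    · exact absurd (show y ≤ m by rw [hMys]; exact Finset.inf_le (f := id) he) hmy
  have hUxy : Ust x = insert m (Ust y) := by
    ext k
    simp only [Finset.mem_insert, mem_Ust]
    constructor
    · rintro ⟨hk1, hk2⟩
      by_cases hky : y ≤ k
      · exact Or.inr ⟨hk1, hky⟩
      · exact Or.inl (huniq k hk1 hk2 hky)
    · rintro (rfl | ⟨hk1, hk2⟩)
      · exact ⟨hMxi _ hmM, hmx⟩
      · exact ⟨hk1, h.lt.le.trans hk2⟩
  rw [hUxy, Finset.card_insert_of_notMem fun hc => hmy (mem_Ust.1 hc).2]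

lemma bwdConst
    (hU : ∀ x : P, ∃ M : Finset P, (∀ m ∈ M, MeetIrredL m) ∧ x = M.inf id ∧
        (∀ A : Finset P, (∀ m ∈ A, MeetIrredL m) → x = A.inf id → M ⊆ A))
    (hJ : ∀ x : P, ∃ J : Finset P, (∀ m ∈ J, JoinIrredL m) ∧ x = J.sup id ∧
        (∀ A : Finset P, (∀ m ∈ A, JoinIrredL m) → x = A.sup id → J ⊆ A))
    (x : P) :
    (Dst x).card + (Ust x).card = (Dst (⊥ : P)).card + (Ust (⊥ : P)).card := by
  induction x using IsWellFounded.induction (fun a b : P => a < b) with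
  | _ a ih =>
    by_cases ha : a = ⊥
    · subst ha; rfl
    · obtain ⟨w, -, hw⟩ := auxCovDown (bot_lt_iff_ne_bot.2 ha)
      have e1 := bwdCovD hJ hw
      have e2 := bwdCovU hU hw
      have e3 := ih w hw.lt
      omega

lemma bwdDsup
    (hU : ∀ x : P, ∃ M : Finset P, (∀ m ∈ M, MeetIrredL m) ∧ x = M.inf id ∧
        (∀ A : Finset P, (∀ m ∈ A, MeetIrredL m) → x = A.inf id → M ⊆ A))
    (hJ : ∀ x : P, ∃ J : Finset P, (∀ m ∈ J, JoinIrredL m) ∧ x = J.sup id ∧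
        (∀ A : Finset P, (∀ m ∈ A, JoinIrredL m) → x = A.sup id → J ⊆ A))
    [DecidableEq P]
    (a b : P) : Dst (a ⊔ b) = Dst a ∪ Dst b := by
  classical
  have hDsub : Dst a ∪ Dst b ⊆ Dst (a ⊔ b) := by
    intro k hk
    rcases Finset.mem_union.1 hk with hk | hk
    · exact mem_Dst.2 ⟨(mem_Dst.1 hk).1, (mem_Dst.1 hk).2.trans le_sup_left⟩
    · exact mem_Dst.2 ⟨(mem_Dst.1 hk).1, (mem_Dst.1 hk).2.trans le_sup_right⟩
  have hUsub : Ust a ∪ Ust b ⊆ Ust (a ⊓ b) := by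
    intro k hk
    rcases Finset.mem_union.1 hk with hk | hk
    · exact mem_Ust.2 ⟨(mem_Ust.1 hk).1, inf_le_left.trans (mem_Ust.1 hk).2⟩
    · exact mem_Ust.2 ⟨(mem_Ust.1 hk).1, inf_le_right.trans (mem_Ust.1 hk).2⟩
  have hDint : (Dst a ∩ Dst b).card = (Dst (a ⊓ b)).card := by
    congr 1
    ext k
    simp only [Finset.mem_inter, mem_Dst, le_inf_iff]
    tauto
  have hUint : (Ust a ∩ Ust b).card = (Ust (a ⊔ b)).card := by
    congr 1
    ext k
    simp only [Finset.mem_inter, mem_Ust, sup_le_iff]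
    tauto
  have c1 := bwdConst hU hJ (a ⊔ b)
  have c2 := bwdConst hU hJ (a ⊓ b)
  have c3 := bwdConst hU hJ a
  have c4 := bwdConst hU hJ b
  have ieD := Finset.card_union_add_card_inter (Dst a) (Dst b)
  have ieU := Finset.card_union_add_card_inter (Ust a) (Ust b)
  have h1 : (Ust a ∪ Ust b).card ≤ (Ust (a ⊓ b)).card := Finset.card_le_card hUsub
  refine (Finset.eq_of_subset_of_card_le hDsub ?_).symm
  omega

lemma bwdDistrib
    (hU : ∀ x : P, ∃ M : Finset P, (∀ m ∈ M, MeetIrredL m) ∧ x = M.inf id ∧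
        (∀ A : Finset P, (∀ m ∈ A, MeetIrredL m) → x = A.inf id → M ⊆ A))
    (hJ : ∀ x : P, ∃ J : Finset P, (∀ m ∈ J, JoinIrredL m) ∧ x = J.sup id ∧
        (∀ A : Finset P, (∀ m ∈ A, JoinIrredL m) → x = A.sup id → J ⊆ A))
    (x y z : P) : x ⊓ (y ⊔ z) = x ⊓ y ⊔ x ⊓ z := by
  have hprime : ∀ j a b : P, JoinIrredL j → j ≤ a ⊔ b → j ≤ a ∨ j ≤ b := by
    classical
    intro j a b hj hle
    have hmem : j ∈ Dst (a ⊔ b) := mem_Dst.2 ⟨hj, hle⟩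
    rw [bwdDsup hU hJ] at hmem
    rcases Finset.mem_union.1 hmem with hm | hm
    · exact Or.inl (mem_Dst.1 hm).2
    · exact Or.inr (mem_Dst.1 hm).2
  refine le_antisymm ?_ (sup_le (inf_le_inf_left x le_sup_left) (inf_le_inf_left x le_sup_right))
  conv_lhs => rw [← sup_Dst (x ⊓ (y ⊔ z))]
  refine Finset.sup_le fun j hj => ?_
  have hj1 := (mem_Dst.1 hj).1
  have hj2 := (mem_Dst.1 hj).2
  rcases hprime j y z hj1 (hj2.trans inf_le_right) with hc | hc
  · exact le_trans (le_inf (hj2.trans inf_le_left) hc) le_sup_left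
  · exact le_trans (le_inf (hj2.trans inf_le_left) hc) le_sup_right

end Backward

/-- A finite lattice is distributive iff it is both upper locally distributive
(every element has a unique minimal representation as a meet of
meet-irreducibles) and lower locally distributive (dually, as a join of
join-irreducibles). -/
theorem stmt_11 {P : Type} [Lattice P] [Fintype P] [BoundedOrder P] :
    (∀ x y z : P, x ⊓ (y ⊔ z) = (x ⊓ y) ⊔ (x ⊓ z)) ↔
    ((∀ x : P, ∃ M : Finset P, (∀ m ∈ M, MeetIrredL m) ∧ x = M.inf id ∧
        (∀ A : Finset P, (∀ m ∈ A, MeetIrredL m) → x = A.inf id → M ⊆ A)) ∧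
     (∀ x : P, ∃ J : Finset P, (∀ m ∈ J, JoinIrredL m) ∧ x = J.sup id ∧
        (∀ A : Finset P, (∀ m ∈ A, JoinIrredL m) → x = A.sup id → J ⊆ A))) := by
  constructor
  · intro hd
    have hdual : ∀ x y z : P, x ⊔ y ⊓ z = (x ⊔ y) ⊓ (x ⊔ z) := by
      intro x y z
      have h1 : (x ⊔ y) ⊓ (x ⊔ z) = (x ⊔ y) ⊓ x ⊔ (x ⊔ y) ⊓ z := hd _ _ _
      have h2 : (x ⊔ y) ⊓ x = x := inf_eq_right.2 le_sup_left
      have h3 : (x ⊔ y) ⊓ z = z ⊓ x ⊔ z ⊓ y := by rw [inf_comm]; exact hd z x y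
      have h4 : x ⊔ z ⊓ x = x := sup_eq_left.2 inf_le_right
      rw [h1, h2, h3, ← sup_assoc, h4, inf_comm z y]
    exact ⟨fwdMeet hdual, fwdJoin hd⟩
  · rintro ⟨hU, hJ⟩
    exact bwdDistrib hU hJ
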